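/- Let A be a commutative Noetherian ring, let K be a bounded cochain complex of finitely generated free A-modules, and let J be an ideal of A annihilating H^q(K) for every q. For m ≥ 0 let J^m K denote the subcomplex of K whose degree-q term is the submodule J^m·K^q. Then there exists n ∈ ℕ such that for every m ≥ 0 and every q, the map H^q(J^{n+m}K) → H^q(J^m K) induced by the inclusion of complexes J^{n+m}K ⊆ J^m K is zero. -/

import Mathlib

open CategoryTheory Limits

namespace ArtinReesComplex

variable {A : Type*} [CommRing A]

lemma map_mem_smul_top {M N : Type*} [AddCommGroup M] [Module A M] [AddCommGroup N]
    [Module A N] (f : M →ₗ[A] N) (I : Ideal A) {x : M}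
    (hx : x ∈ I • (⊤ : Submodule A M)) : f x ∈ I • (⊤ : Submodule A N) := by
  have h1 : f x ∈ Submodule.map f (I • (⊤ : Submodule A M)) := Submodule.mem_map_of_mem hx
  rw [Submodule.map_smul''] at h1
  exact (smul_mono_right I le_top :
    I • Submodule.map f ⊤ ≤ I • (⊤ : Submodule A N)) h1

/-- The differential of the subcomplex `J^m K`, i.e. the restriction of the
differential of `K` to the submodules `J^m · K^q`. -/
noncomputable def resD (J : Ideal A) (K : CochainComplex (ModuleCat A) ℤ) (m : ℕ)
    (i j : ℤ) :
    ↥(J ^ m • (⊤ : Submodule A (K.X i))) →ₗ[A] ↥(J ^ m • (⊤ : Submodule A (K.X j))) :=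
  (K.d i j).hom.restrict (fun x hx => map_mem_smul_top _ _ hx)

lemma resD_shape (J : Ideal A) (K : CochainComplex (ModuleCat A) ℤ) (m : ℕ)
    {i j : ℤ} (h : ¬ (ComplexShape.up ℤ).Rel i j) : resD J K m i j = 0 := by
  have h0 : K.d i j = 0 := K.shape i j h
  apply LinearMap.ext
  intro x
  refine Subtype.ext ?_
  show (K.d i j).hom x.1 = 0
  rw [h0]
  rfl

lemma resD_comp (J : Ideal A) (K : CochainComplex (ModuleCat A) ℤ) (m : ℕ)
    (i j k : ℤ) : resD J K m j k ∘ₗ resD J K m i j = 0 := by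
  apply LinearMap.ext
  intro x
  refine Subtype.ext ?_
  have h0 : (K.d j k).hom ∘ₗ (K.d i j).hom = 0 := by
    rw [← ModuleCat.hom_comp, K.d_comp_d, ModuleCat.hom_zero]
  exact LinearMap.congr_fun h0 x.1

/-- The subcomplex `J^m K` of a cochain complex `K` of `A`-modules, whose degree-`q`
term is `J^m · K^q`. -/
noncomputable def smulSubcomplex (J : Ideal A) (K : CochainComplex (ModuleCat A) ℤ)
    (m : ℕ) : CochainComplex (ModuleCat A) ℤ where
  X q := ModuleCat.of A ↥(J ^ m • (⊤ : Submodule A (K.X q)))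
  d i j := ModuleCat.ofHom (resD J K m i j)
  shape i j h := ModuleCat.hom_ext (resD_shape J K m h)
  d_comp_d' i j k _ _ := ModuleCat.hom_ext (resD_comp J K m i j k)

/-- The inclusion of subcomplexes `J^{m'} K ⟶ J^m K` for `m ≤ m'`. -/
noncomputable def smulSubcomplexIncl (J : Ideal A) (K : CochainComplex (ModuleCat A) ℤ)
    {m m' : ℕ} (h : m ≤ m') : smulSubcomplex J K m' ⟶ smulSubcomplex J K m where
  f q := ModuleCat.ofHom <| Submodule.inclusion
    (show (J ^ m' • (⊤ : Submodule A (K.X q))) ≤ J ^ m • (⊤ : Submodule A (K.X q)) from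
      Submodule.smul_mono_left (Ideal.pow_le_pow_right h))
  comm' i j _ := by
    apply ModuleCat.hom_ext
    apply LinearMap.ext
    intro x
    exact Subtype.ext rfl


section Aux

variable {R : Type*} [CommRing R]

lemma artinRees_poly {R : Type*} [CommRing R] [IsNoetherianRing R] (I : Ideal R)
    {M : Type*} [AddCommGroup M] [Module R M] [Module.Finite R M]
    (N : Submodule R M) :
    ∃ k : ℕ, ∀ n ≥ k, I ^ n • (⊤ : Submodule R M) ⊓ N = I ^ (n - k) • (I ^ k • ⊤ ⊓ N) := by
  obtain ⟨r, π, hπ⟩ := Module.Finite.exists_fin' R M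
  obtain ⟨k, hk⟩ := Ideal.exists_pow_inf_eq_pow_smul I (N.comap π)
  refine ⟨k, fun n hn => ?_⟩
  have hmap : ∀ (P : Submodule R (Fin r → R)),
      Submodule.map π (P ⊓ N.comap π) = Submodule.map π P ⊓ N := by
    intro P
    apply le_antisymm
    · exact le_inf (Submodule.map_mono inf_le_left)
        ((Submodule.map_le_iff_le_comap).2 inf_le_right)
    · rintro z ⟨⟨x, hx, rfl⟩, hz⟩
      exact ⟨x, ⟨hx, hz⟩, rfl⟩
  have htop : Submodule.map π (⊤ : Submodule R (Fin r → R)) = ⊤ := by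
    rw [Submodule.map_top, LinearMap.range_eq_top]
    exact hπ
  calc I ^ n • (⊤ : Submodule R M) ⊓ N
      = Submodule.map π (I ^ n • ⊤ ⊓ N.comap π) := by
        rw [hmap, Submodule.map_smul'', htop]
    _ = Submodule.map π (I ^ (n - k) • (I ^ k • ⊤ ⊓ N.comap π)) := by rw [hk n hn]
    _ = I ^ (n - k) • (I ^ k • (⊤ : Submodule R M) ⊓ N) := by
        rw [Submodule.map_smul'', hmap, Submodule.map_smul'', htop]

lemma sc_homologyMap_eq_zero {S₁ S₂ : CategoryTheory.ShortComplex (ModuleCat R)}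
    (φ : S₁ ⟶ S₂)
    (h : ∀ x : S₁.X₂, S₁.g x = 0 → ∃ y : S₂.X₁, S₂.f y = φ.τ₂ x) :
    ShortComplex.homologyMap φ = 0 := by
  rw [← cancel_epi S₁.homologyπ, ShortComplex.homologyπ_naturality, comp_zero,
    ← cancel_mono S₂.moduleCatHomologyIso.hom, zero_comp, Category.assoc,
    ShortComplex.π_moduleCatCyclesIso_hom]
  ext c
  obtain ⟨y, hy⟩ := h (S₁.iCycles c) (by rw [← ConcreteCategory.comp_apply, S₁.iCycles_g]; simp)
  simp only [ModuleCat.hom_comp, LinearMap.comp_apply, ModuleCat.hom_zero, LinearMap.zero_apply]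
  change (LinearMap.range S₂.moduleCatToCycles).mkQ (show LinearMap.ker S₂.g.hom from
    S₂.moduleCatCyclesIso.hom (ShortComplex.cyclesMap φ c)) = 0
  rw [Submodule.mkQ_apply, Submodule.Quotient.mk_eq_zero]
  refine ⟨y, Subtype.ext ?_⟩
  have e1 := ShortComplex.moduleCatCyclesIso_hom_i_apply S₂ (ShortComplex.cyclesMap φ c)
  refine hy.trans ?_
  rw [← ConcreteCategory.comp_apply, ← ShortComplex.cyclesMap_i, ConcreteCategory.comp_apply, ← e1]
  rfl

lemma hc_homologyMap_eq_zero {ι : Type*} {c : ComplexShape ι}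
    {L M : HomologicalComplex (ModuleCat R) c} (φ : L ⟶ M) (q : ι)
    (h : ∀ x : L.X q, L.d q (c.next q) x = 0 →
      ∃ y : M.X (c.prev q), M.d (c.prev q) q y = φ.f q x) :
    HomologicalComplex.homologyMap φ q = 0 :=
  sc_homologyMap_eq_zero _ h

lemma smul_cycle_is_boundary {ι : Type*} {cs : ComplexShape ι}
    {K : HomologicalComplex (ModuleCat R) cs} {J : Ideal R}
    (q : ι) (hq : ∀ (c : R), c ∈ J → ∀ x : K.homology q, c • x = 0)
    {c : R} (hc : c ∈ J) {z : K.X q}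
    (hz : K.d q (cs.next q) z = 0) :
    ∃ y : K.X (cs.prev q), K.d (cs.prev q) q y = c • z := by
  set S := K.sc q with hS
  set e := S.moduleCatHomologyIso with he
  set w : LinearMap.ker S.g.hom := ⟨z, hz⟩ with hw
  set x : S.homology := e.inv (Submodule.Quotient.mk w) with hx
  have h0 : c • x = 0 := hq c hc x
  have h1 : e.hom (c • x) = 0 := by rw [h0, map_zero]
  rw [map_smul] at h1
  have hx2 : e.hom x = Submodule.Quotient.mk w := by
    exact e.inv_hom_id_apply _
  rw [hx2] at h1
  have h1' : c • (Submodule.Quotient.mk w : LinearMap.ker S.g.hom ⧸ LinearMap.range S.moduleCatToCycles) = 0 := h1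
  rw [← Submodule.Quotient.mk_smul, Submodule.Quotient.mk_eq_zero] at h1'
  obtain ⟨y, hy⟩ := h1'
  exact ⟨y, congrArg Subtype.val hy⟩

end Aux

/-- **Artin–Rees for bounded complexes.**  Let `A` be commutative Noetherian, `K` a
bounded cochain complex of finitely generated free `A`-modules, and `J` an ideal
annihilating the cohomology `H^q(K)` for all `q`.  Then there is `n` such that for all
`m ≥ 0` and all `q`, the map `H^q(J^{n+m} K) → H^q(J^m K)` induced by the inclusion
is zero. -/
theorem exists_homologyMap_smulSubcomplexIncl_eq_zero
    (A : Type*) [CommRing A] [IsNoetherianRing A] (J : Ideal A)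
    (K : CochainComplex (ModuleCat A) ℤ)
    (hfree : ∀ q : ℤ, Module.Free A (K.X q))
    (hfin : ∀ q : ℤ, Module.Finite A (K.X q))
    (hbdd : ∃ a b : ℤ, ∀ q : ℤ, (q < a ∨ b < q) → IsZero (K.X q))
    (hann : ∀ (q : ℤ) (c : A), c ∈ J → ∀ x : K.homology q, c • x = 0) :
    ∃ n : ℕ, ∀ (m : ℕ) (q : ℤ),
      HomologicalComplex.homologyMap
        (smulSubcomplexIncl J K (Nat.le_add_left m n)) q = 0 := by
  classical
  obtain ⟨a, b, hbd⟩ := hbdd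
  set cs := ComplexShape.up ℤ with hcs
  set Z : ∀ q : ℤ, Submodule A (K.X q) := fun q =>
    LinearMap.ker (K.d q (cs.next q)).hom with hZ
  have AR : ∀ q : ℤ, ∃ k : ℕ, ∀ n ≥ k,
      J ^ n • (⊤ : Submodule A (K.X q)) ⊓ Z q = J ^ (n - k) • (J ^ k • ⊤ ⊓ Z q) := fun q => by
    haveI := hfin q
    exact artinRees_poly (M := K.X q) J (Z q)
  choose k hk using AR
  refine ⟨((Finset.Icc a b).sup k) + 1, fun m q => ?_⟩
  set n := ((Finset.Icc a b).sup k) + 1 with hn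
  apply hc_homologyMap_eq_zero
  intro x hx
  by_cases hq : q ∈ Finset.Icc a b
  · -- interesting case
    have hxZ : x.1 ∈ Z q := congrArg Subtype.val hx
    have hmem : x.1 ∈ J ^ (n + m) • (⊤ : Submodule A (K.X q)) ⊓ Z q := ⟨x.2, hxZ⟩
    have hkq : k q ≤ (Finset.Icc a b).sup k := Finset.le_sup hq
    rw [hk q (n + m) (by omega)] at hmem
    have h1 : J ^ (n + m - k q) • (J ^ (k q) • (⊤ : Submodule A (K.X q)) ⊓ Z q)
        ≤ J ^ (m + 1) • Z q :=
      Submodule.smul_mono (Ideal.pow_le_pow_right (by omega)) inf_le_right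
    have hJZ : J • Z q ≤ LinearMap.range (K.d (cs.prev q) q).hom := by
      refine Submodule.smul_le.2 (fun r hr z hz => ?_)
      obtain ⟨y, hy⟩ := smul_cycle_is_boundary q (hann q) hr hz
      exact ⟨y, hy⟩
    have h2 : J ^ (m + 1) • Z q ≤
        Submodule.map (K.d (cs.prev q) q).hom
          (J ^ m • (⊤ : Submodule A (K.X (cs.prev q)))) := by
      rw [pow_succ, ← smul_eq_mul, Submodule.smul_assoc, Submodule.map_smul'',
        Submodule.map_top]
      exact smul_mono_right _ hJZ
    obtain ⟨y, hym, hyv⟩ := h2 (h1 hmem)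
    exact ⟨⟨y, hym⟩, Subtype.ext hyv⟩
  · -- degenerate case: K.X q is zero
    have hz : IsZero (K.X q) := hbd q (by
      simp only [Finset.mem_Icc, not_and_or, not_le] at hq
      omega)
    have hid : 𝟙 (K.X q) = 0 := hz.eq_of_src _ _
    have hx0 : (x.1 : K.X q) = 0 := by
      have h3 := LinearMap.congr_fun (ModuleCat.hom_ext_iff.1 hid) x.1
      simpa using h3
    refine ⟨0, Subtype.ext ?_⟩
    show (K.d (cs.prev q) q).hom 0 = x.1
    rw [map_zero, hx0]


end ArtinReesComplex
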